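/- Let e₀ > 0, e₁ > 0 with e₀ < e₁, and suppose h(α) := e₀ · (−ln(1−α)) − e₁·α + c ≥ 0 for all α ∈ [0,1). Then sqrt(e₁) − sqrt(c) ≤ sqrt(e₀). -/

import Mathlib

theorem stmt_2 (e₀ e₁ c : ℝ) (he₀ : 0 < e₀) (he₁ : 0 < e₁) (hlt : e₀ < e₁) (hc : 0 ≤ c)
    (hnn : ∀ α ∈ Set.Ico (0:ℝ) 1, 0 ≤ e₀ * (-Real.log (1 - α)) - e₁ * α + c) :
    Real.sqrt e₁ - Real.sqrt c ≤ Real.sqrt e₀ := by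
  set s₀ := Real.sqrt e₀ with hs₀
  set s₁ := Real.sqrt e₁ with hs₁
  have hs₀pos : 0 < s₀ := Real.sqrt_pos.mpr he₀
  have hs₁pos : 0 < s₁ := Real.sqrt_pos.mpr he₁
  have hsq₀ : s₀ ^ 2 = e₀ := Real.sq_sqrt he₀.le
  have hsq₁ : s₁ ^ 2 = e₁ := Real.sq_sqrt he₁.le
  -- evaluate hypothesis at α = 1 - e₀/e₁
  have hratio : (0:ℝ) < e₀ / e₁ := div_pos he₀ he₁
  have hratio1 : e₀ / e₁ < 1 := (div_lt_one he₁).mpr hlt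
  have hα : (1 - e₀ / e₁) ∈ Set.Ico (0:ℝ) 1 := by
    constructor <;> simp <;> [exact hratio1.le; exact hratio]
  have key := hnn _ hα
  have h1 : (1:ℝ) - (1 - e₀ / e₁) = e₀ / e₁ := by ring
  rw [h1] at key
  have hlog : Real.log (e₀ / e₁) = Real.log e₀ - Real.log e₁ :=
    Real.log_div he₀.ne' he₁.ne'
  rw [hlog] at key
  -- c ≥ e₁ - e₀ - e₀ * (log e₁ - log e₀)
  have hcge : e₁ - e₀ - e₀ * (Real.log e₁ - Real.log e₀) ≤ c := by
    have he : e₁ * (1 - e₀ / e₁) = e₁ - e₀ := by field_simp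
    nlinarith [key]
  -- log inequality: log t ≤ t - 1 with t = s₁ / s₀
  have ht : (0:ℝ) < s₁ / s₀ := div_pos hs₁pos hs₀pos
  have hlt' : Real.log (s₁ / s₀) ≤ s₁ / s₀ - 1 := Real.log_le_sub_one_of_pos ht
  have hlogdiff : Real.log e₁ - Real.log e₀ = 2 * Real.log (s₁ / s₀) := by
    rw [Real.log_div hs₁pos.ne' hs₀pos.ne', ← hsq₀, ← hsq₁,
      Real.log_pow, Real.log_pow]
    push_cast; ring
  have hkey2 : e₀ * (Real.log e₁ - Real.log e₀) ≤ 2 * s₀ * s₁ - 2 * e₀ := by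
    rw [hlogdiff]
    have := mul_le_mul_of_nonneg_left hlt' he₀.le
    have h2 : e₀ * (s₁ / s₀) = s₀ * s₁ := by
      rw [← hsq₀]; field_simp
    nlinarith
  -- so (s₁ - s₀)^2 ≤ c
  have hsq : (s₁ - s₀) ^ 2 ≤ c := by nlinarith
  have hsc : s₁ - s₀ ≤ Real.sqrt c := by
    calc s₁ - s₀ ≤ |s₁ - s₀| := le_abs_self _
    _ = Real.sqrt ((s₁ - s₀) ^ 2) := (Real.sqrt_sq_eq_abs _).symm
    _ ≤ Real.sqrt c := Real.sqrt_le_sqrt hsq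
  linarith
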